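/- Assume the high-probability event of the confidence lemma: for all t ∈ [T], h ∈ [H], and (s,a), 0 ≤ Q̄^t_h(s,a) − T*_h Q̄^t_{h+1}(s,a) ≤ 2βσ^t_h(s,a) and 0 ≤ T*_h Q̲^t_{h+1}(s,a) − Q̲^t_h(s,a) ≤ 2βσ^t_h(s,a), with Q̄^t_{H+1} = Q̲^t_{H+1} = 0. Suppose the algorithm picks s^t_h maximizing max_a Q̄^t_h(·,a) − max_a Q̲^t_h(·,a) and a^t_h maximizing Q̄^t_h(s^t_h,·), and outputs π̂ with π̂_h(s) = argmax_a max_{t∈[T]} Q̲^t_h(s,a). If additionally Σ_{t=1}^T σ^t_h(s^t_h,a^t_h) ≤ √(3 Γ T) for every h, then sup_{s∈S} (V*_1(s) − V^π̂_1(s)) ≤ 2√3 · β H (H+1) √(Γ/T). -/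

import Mathlib

/-- The Bellman optimality operator of an episodic MDP:
`(T*_h Q)(s,a) = r_h(s,a) + E_{s'~P_h(·|s,a)}[max_{a'} Q(s',a')]`. -/
noncomputable def Tstar {S A : Type} [Fintype S]
    (P : ℕ → S → A → S → ℝ) (r : ℕ → S → A → ℝ) (h : ℕ) (Q : S → A → ℝ) :
    S → A → ℝ :=
  fun s a => r h s a + ∑ s' : S, P h s a s' * ⨆ a' : A, Q s' a'

/-- Deterministic core of the AE-LSVI sample complexity theorem: under the confidence
lemma event, the active state/action selection rules, the pessimistic policy reporting
rule, and the sum-of-standard-deviations bound `Σ_t σ^t_h(s^t_h,a^t_h) ≤ √(3ΓT)`,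
the reported policy `π̂` satisfies
`sup_s (V*_1(s) - V^π̂_1(s)) ≤ 2√3 · βH(H+1)√(Γ/T)`. -/
theorem stmt13 {S A : Type} [Fintype S] [Fintype A] [Nonempty S] [Nonempty A]
    (H T : ℕ) (hH : 0 < H) (hT : 0 < T)
    (P : ℕ → S → A → S → ℝ) (r : ℕ → S → A → ℝ)
    (hP0 : ∀ h s a s', 0 ≤ P h s a s')
    (hP1 : ∀ h s a, ∑ s' : S, P h s a s' = 1)
    (hr : ∀ h s a, 0 ≤ r h s a ∧ r h s a ≤ 1)
    (β Γ : ℝ) (hβ : 0 < β) (hΓ : 0 < Γ)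
    (σ : ℕ → ℕ → S → A → ℝ) (hσ0 : ∀ t h s a, 0 ≤ σ t h s a)
    -- optimistic and pessimistic estimates with the confidence-lemma event
    (Qbar Qlow : ℕ → ℕ → S → A → ℝ)
    (htop : ∀ t s a, Qbar t (H + 1) s a = 0 ∧ Qlow t (H + 1) s a = 0)
    (hconf : ∀ t ∈ Finset.Icc 1 T, ∀ h ∈ Finset.Icc 1 H, ∀ s a,
      (0 ≤ Qbar t h s a - Tstar P r h (Qbar t (h + 1)) s a ∧
        Qbar t h s a - Tstar P r h (Qbar t (h + 1)) s a ≤ 2 * β * σ t h s a) ∧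
      (0 ≤ Tstar P r h (Qlow t (h + 1)) s a - Qlow t h s a ∧
        Tstar P r h (Qlow t (h + 1)) s a - Qlow t h s a ≤ 2 * β * σ t h s a))
    -- selected states and actions
    (ss : ℕ → ℕ → S) (aa : ℕ → ℕ → A)
    (hss : ∀ t ∈ Finset.Icc 1 T, ∀ h ∈ Finset.Icc 1 H, ∀ s : S,
      (⨆ a : A, Qbar t h s a) - (⨆ a : A, Qlow t h s a) ≤
        (⨆ a : A, Qbar t h (ss t h) a) - ⨆ a : A, Qlow t h (ss t h) a)
    (haa : ∀ t ∈ Finset.Icc 1 T, ∀ h ∈ Finset.Icc 1 H, ∀ a : A,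
      Qbar t h (ss t h) a ≤ Qbar t h (ss t h) (aa t h))
    -- sum-of-standard-deviations bound
    (hsum : ∀ h ∈ Finset.Icc 1 H,
      ∑ t ∈ Finset.Icc 1 T, σ t h (ss t h) (aa t h) ≤ Real.sqrt (3 * Γ * T))
    -- the optimal Q-function
    (Qstar : ℕ → S → A → ℝ)
    (hQstartop : ∀ s a, Qstar (H + 1) s a = 0)
    (hQstarrec : ∀ h ∈ Finset.Icc 1 H, ∀ s a,
      Qstar h s a = Tstar P r h (Qstar (h + 1)) s a)
    -- values of deterministic policies, given by the Bellman equations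
    (Vpol : (ℕ → S → A) → ℕ → S → ℝ) (Qpol : (ℕ → S → A) → ℕ → S → A → ℝ)
    (hVtop : ∀ π s, Vpol π (H + 1) s = 0)
    (hQpol : ∀ π, ∀ h ∈ Finset.Icc 1 H, ∀ s a,
      Qpol π h s a = r h s a + ∑ s' : S, P h s a s' * Vpol π (h + 1) s')
    (hVpol : ∀ π, ∀ h ∈ Finset.Icc 1 H, ∀ s, Vpol π h s = Qpol π h s (π h s))
    -- π* is an optimal deterministic (greedy w.r.t. Q*) policy with Q^{π*} = Q*,
    -- so that V^{π*}_1 = V*_1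
    (πstar : ℕ → S → A)
    (hπstarQ : ∀ h ∈ Finset.Icc 1 (H + 1), ∀ s a, Qpol πstar h s a = Qstar h s a)
    (hπstarg : ∀ h ∈ Finset.Icc 1 H, ∀ s a, Qstar h s a ≤ Qstar h s (πstar h s))
    -- the reported pessimistic-greedy policy π̂
    (πhat : ℕ → S → A)
    (hπhat : ∀ h ∈ Finset.Icc 1 H, ∀ s a,
      (⨆ t ∈ Finset.Icc 1 T, Qlow t h s a) ≤ ⨆ t ∈ Finset.Icc 1 T, Qlow t h s (πhat h s)) :
    ∀ s : S, Vpol πstar 1 s - Vpol πhat 1 s ≤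
      2 * Real.sqrt 3 * β * H * (H + 1) * Real.sqrt (Γ / T) := by

  classical
  -- boundedness of sups over the finite action type
  have bddA : ∀ f : A → ℝ, BddAbove (Set.range f) :=
    fun f => Set.Finite.bddAbove (Set.finite_range f)
  -- Optimism: Qstar ≤ Qbar
  have hU : ∀ k h, h + k = H + 1 → 1 ≤ h → ∀ t ∈ Finset.Icc 1 T, ∀ s a,
      Qstar h s a ≤ Qbar t h s a := by
    intro k
    induction k with
    | zero =>
      intro h hh _ t _ s a
      have : h = H + 1 := by omega
      subst this
      rw [hQstartop, (htop t s a).1]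
    | succ k ih =>
      intro h hh h1 t ht s a
      have hhH : h ∈ Finset.Icc 1 H := by simp [Finset.mem_Icc]; omega
      have h2 := hQstarrec h hhH s a
      have h3 := ((hconf t ht h hhH s a).1).1
      have h4 : Tstar P r h (Qstar (h+1)) s a ≤ Tstar P r h (Qbar t (h+1)) s a := by
        unfold Tstar
        have hsum' : ∀ s' : S, P h s a s' * (⨆ a' : A, Qstar (h+1) s' a') ≤
            P h s a s' * ⨆ a' : A, Qbar t (h+1) s' a' := by
          intro s'
          apply mul_le_mul_of_nonneg_left _ (hP0 h s a s')
          exact ciSup_mono (bddA _) (fun a' => ih (h+1) (by omega) (by omega) t ht s' a')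
        exact add_le_add_right (Finset.sum_le_sum (fun s' _ => hsum' s')) _
      linarith
  -- Pessimism: Qlow ≤ Vpol πhat (through the reporting rule), and Vpol πhat ≥ 0
  have hC : ∀ k h, h + k = H + 1 → 1 ≤ h → ∀ s : S,
      0 ≤ Vpol πhat h s ∧ ∀ t ∈ Finset.Icc 1 T, ∀ a, Qlow t h s a ≤ Vpol πhat h s := by
    intro k
    induction k with
    | zero =>
      intro h hh _ s
      have : h = H + 1 := by omega
      subst this
      constructor
      · rw [hVtop]
      · intro t _ a; rw [hVtop, (htop t s a).2]
    | succ k ih =>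
      intro h hh h1 s
      have hhH : h ∈ Finset.Icc 1 H := by simp [Finset.mem_Icc]; omega
      have ih' := ih (h+1) (by omega) (by omega)
      -- step (*) : Qlow t h s a ≤ Qpol πhat h s a for all s a
      have hstar : ∀ s : S, ∀ t ∈ Finset.Icc 1 T, ∀ a, Qlow t h s a ≤ Qpol πhat h s a := by
        intro s t ht a
        have h3 := ((hconf t ht h hhH s a).2).1
        have h4 : Tstar P r h (Qlow t (h+1)) s a ≤ Qpol πhat h s a := by
          rw [hQpol πhat h hhH s a]
          unfold Tstar
          apply add_le_add_right
          apply Finset.sum_le_sum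
          intro s' _
          apply mul_le_mul_of_nonneg_left _ (hP0 h s a s')
          exact ciSup_le (fun a' => (ih' s').2 t ht a')
        linarith
      have hV0 : 0 ≤ Vpol πhat h s := by
        rw [hVpol πhat h hhH s, hQpol πhat h hhH s _]
        apply add_nonneg (hr h s _).1
        apply Finset.sum_nonneg
        intro s' _
        exact mul_nonneg (hP0 h s _ s') (ih' s').1
      refine ⟨hV0, ?_⟩
      intro t ht a
      have hbdd : ∀ b : A, BddAbove (Set.range fun t' =>
          ⨆ _ : t' ∈ Finset.Icc 1 T, Qlow t' h s b) := by
        intro b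
        apply Set.Finite.bddAbove
        apply Set.Finite.subset (Set.Finite.insert 0
          ((Finset.Icc 1 T : Finset ℕ).finite_toSet.image (fun t' => Qlow t' h s b)))
        rintro x ⟨t', rfl⟩
        by_cases ht' : t' ∈ Finset.Icc 1 T
        · right
          haveI : Nonempty (t' ∈ Finset.Icc 1 T) := ⟨ht'⟩
          exact ⟨t', ht', (ciSup_const).symm⟩
        · left
          haveI : IsEmpty (t' ∈ Finset.Icc 1 T) := ⟨ht'⟩
          exact Real.iSup_of_isEmpty _
      have step1 : Qlow t h s a ≤ ⨆ t' ∈ Finset.Icc 1 T, Qlow t' h s a := by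
        haveI : Nonempty (t ∈ Finset.Icc 1 T) := ⟨ht⟩
        calc Qlow t h s a = ⨆ _ : t ∈ Finset.Icc 1 T, Qlow t h s a := (ciSup_const).symm
        _ ≤ ⨆ t' ∈ Finset.Icc 1 T, Qlow t' h s a := le_ciSup (hbdd a) t
      have step2 := hπhat h hhH s a
      have step3 : (⨆ t' ∈ Finset.Icc 1 T, Qlow t' h s (πhat h s)) ≤ Vpol πhat h s := by
        apply ciSup_le
        intro t'
        by_cases ht' : t' ∈ Finset.Icc 1 T
        · haveI : Nonempty (t' ∈ Finset.Icc 1 T) := ⟨ht'⟩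
          rw [ciSup_const]
          calc Qlow t' h s (πhat h s) ≤ Qpol πhat h s (πhat h s) := hstar s t' ht' _
          _ = Vpol πhat h s := (hVpol πhat h hhH s).symm
        · haveI : IsEmpty (t' ∈ Finset.Icc 1 T) := ⟨ht'⟩
          rw [Real.iSup_of_isEmpty]
          exact hV0
      linarith
  -- the uncertainty gap at the selected states
  set g : ℕ → ℕ → ℝ := fun t h =>
    (⨆ a : A, Qbar t h (ss t h) a) - ⨆ a : A, Qlow t h (ss t h) a with hg
  have hGtop : ∀ t, g t (H+1) = 0 := by
    intro t
    simp only [hg]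
    have h1 : (⨆ a : A, Qbar t (H+1) (ss t (H+1)) a) = 0 := by
      have : (fun a : A => Qbar t (H+1) (ss t (H+1)) a) = fun _ => (0:ℝ) := by
        funext a; exact (htop t _ a).1
      rw [this, ciSup_const]
    have h2 : (⨆ a : A, Qlow t (H+1) (ss t (H+1)) a) = 0 := by
      have : (fun a : A => Qlow t (H+1) (ss t (H+1)) a) = fun _ => (0:ℝ) := by
        funext a; exact (htop t _ a).2
      rw [this, ciSup_const]
    rw [h1, h2, sub_zero]
  -- gap recursion
  have hGstep : ∀ t ∈ Finset.Icc 1 T, ∀ h ∈ Finset.Icc 1 H,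
      g t h ≤ g t (h+1) + 4 * β * σ t h (ss t h) (aa t h) := by
    intro t ht h hh
    have hub : (⨆ a : A, Qbar t h (ss t h) a) ≤ Qbar t h (ss t h) (aa t h) :=
      ciSup_le (haa t ht h hh)
    have hlb : Qlow t h (ss t h) (aa t h) ≤ ⨆ a : A, Qlow t h (ss t h) a :=
      le_ciSup (bddA _) (aa t h)
    have hc1 := ((hconf t ht h hh (ss t h) (aa t h)).1).2
    have hc2 := ((hconf t ht h hh (ss t h) (aa t h)).2).2
    have hdiff : Tstar P r h (Qbar t (h+1)) (ss t h) (aa t h) -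
        Tstar P r h (Qlow t (h+1)) (ss t h) (aa t h) ≤ g t (h+1) := by
      have key : ∀ s' : S,
          (⨆ a : A, Qbar t (h+1) s' a) - (⨆ a : A, Qlow t (h+1) s' a) ≤ g t (h+1) := by
        intro s'
        by_cases hcase : h + 1 ≤ H
        · exact hss t ht (h+1) (by simp [Finset.mem_Icc]; omega) s'
        · have hH1 : h + 1 = H + 1 := by
            simp [Finset.mem_Icc] at hh; omega
          rw [hH1, hGtop t]
          have e1 : (⨆ a : A, Qbar t (H+1) s' a) = 0 := by
            have : (fun a : A => Qbar t (H+1) s' a) = fun _ => (0:ℝ) := by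
              funext a; exact (htop t s' a).1
            rw [this, ciSup_const]
          have e2 : (⨆ a : A, Qlow t (H+1) s' a) = 0 := by
            have : (fun a : A => Qlow t (H+1) s' a) = fun _ => (0:ℝ) := by
              funext a; exact (htop t s' a).2
            rw [this, ciSup_const]
          rw [e1, e2]; norm_num
      have expand : Tstar P r h (Qbar t (h+1)) (ss t h) (aa t h) -
          Tstar P r h (Qlow t (h+1)) (ss t h) (aa t h) =
          ∑ s' : S, P h (ss t h) (aa t h) s' *
            ((⨆ a : A, Qbar t (h+1) s' a) - ⨆ a : A, Qlow t (h+1) s' a) := by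
        unfold Tstar
        have hrw : ∑ s' : S, P h (ss t h) (aa t h) s' *
            ((⨆ a : A, Qbar t (h+1) s' a) - ⨆ a : A, Qlow t (h+1) s' a) =
            (∑ s' : S, P h (ss t h) (aa t h) s' * ⨆ a : A, Qbar t (h+1) s' a) -
            ∑ s' : S, P h (ss t h) (aa t h) s' * ⨆ a : A, Qlow t (h+1) s' a := by
          rw [← Finset.sum_sub_distrib]
          apply Finset.sum_congr rfl
          intro s' _
          ring
        rw [hrw]
        ring
      rw [expand]
      calc ∑ s' : S, P h (ss t h) (aa t h) s' *
            ((⨆ a : A, Qbar t (h+1) s' a) - ⨆ a : A, Qlow t (h+1) s' a)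
          ≤ ∑ s' : S, P h (ss t h) (aa t h) s' * g t (h+1) := by
            apply Finset.sum_le_sum
            intro s' _
            exact mul_le_mul_of_nonneg_left (key s') (hP0 h _ _ s')
        _ = g t (h+1) := by rw [← Finset.sum_mul, hP1 h _ _, one_mul]
    calc g t h ≤ Qbar t h (ss t h) (aa t h) - Qlow t h (ss t h) (aa t h) := by
          simp only [hg]; linarith
      _ ≤ g t (h+1) + 4 * β * σ t h (ss t h) (aa t h) := by linarith
  -- telescoping
  have hG1 : ∀ t ∈ Finset.Icc 1 T, ∀ k h, h + k = H + 1 → 1 ≤ h →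
      g t h ≤ 4 * β * ∑ h' ∈ Finset.Icc h H, σ t h' (ss t h') (aa t h') := by
    intro t ht k
    induction k with
    | zero =>
      intro h hh _
      have : h = H + 1 := by omega
      subst this
      rw [hGtop t, Finset.Icc_eq_empty (by omega), Finset.sum_empty, mul_zero]
    | succ k ih =>
      intro h hh h1
      have hhH : h ≤ H := by omega
      have := hGstep t ht h (by simp [Finset.mem_Icc]; omega)
      have ih' := ih (h+1) (by omega) (by omega)
      rw [← Finset.insert_Icc_add_one_left_eq_Icc hhH, Finset.sum_insert (by simp [Finset.mem_Icc])]
      calc g t h ≤ g t (h+1) + 4 * β * σ t h (ss t h) (aa t h) := this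
        _ ≤ 4 * β * ∑ h' ∈ Finset.Icc (h+1) H, σ t h' (ss t h') (aa t h') +
            4 * β * σ t h (ss t h) (aa t h) := by linarith
        _ = 4 * β * (σ t h (ss t h) (aa t h) +
            ∑ h' ∈ Finset.Icc (h+1) H, σ t h' (ss t h') (aa t h')) := by ring
  -- main argument
  intro s
  have h1H : (1:ℕ) ∈ Finset.Icc 1 H := by simp [Finset.mem_Icc]; omega
  have key : ∀ t ∈ Finset.Icc 1 T, Vpol πstar 1 s - Vpol πhat 1 s ≤ g t 1 := by
    intro t ht
    have hstar1 : Vpol πstar 1 s ≤ ⨆ a : A, Qbar t 1 s a := by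
      rw [hVpol πstar 1 h1H s, hπstarQ 1 (by simp [Finset.mem_Icc]) s _]
      calc Qstar 1 s (πstar 1 s) ≤ Qbar t 1 s (πstar 1 s) :=
            hU H 1 (by omega) le_rfl t ht s _
        _ ≤ ⨆ a : A, Qbar t 1 s a := le_ciSup (bddA _) _
    have hhat1 : (⨆ a : A, Qlow t 1 s a) ≤ Vpol πhat 1 s :=
      ciSup_le (fun a => (hC H 1 (by omega) le_rfl s).2 t ht a)
    have := hss t ht 1 h1H s
    simp only [hg] at this ⊢
    linarith
  have havg : (T:ℝ) * (Vpol πstar 1 s - Vpol πhat 1 s) ≤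
      4 * β * ((H:ℝ) * Real.sqrt (3 * Γ * T)) := by
    have e1 : (T:ℝ) * (Vpol πstar 1 s - Vpol πhat 1 s) =
        ∑ _t ∈ Finset.Icc 1 T, (Vpol πstar 1 s - Vpol πhat 1 s) := by
      rw [Finset.sum_const, Nat.card_Icc]
      simp
    rw [e1]
    calc ∑ t ∈ Finset.Icc 1 T, (Vpol πstar 1 s - Vpol πhat 1 s)
        ≤ ∑ t ∈ Finset.Icc 1 T, g t 1 := Finset.sum_le_sum key
      _ ≤ ∑ t ∈ Finset.Icc 1 T,
          4 * β * ∑ h' ∈ Finset.Icc 1 H, σ t h' (ss t h') (aa t h') :=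
            Finset.sum_le_sum (fun t ht => hG1 t ht H 1 (by omega) le_rfl)
      _ = 4 * β * ∑ h' ∈ Finset.Icc 1 H,
          ∑ t ∈ Finset.Icc 1 T, σ t h' (ss t h') (aa t h') := by
            rw [← Finset.mul_sum, Finset.sum_comm]
      _ ≤ 4 * β * ∑ _h' ∈ Finset.Icc 1 H, Real.sqrt (3 * Γ * T) := by
            apply mul_le_mul_of_nonneg_left (Finset.sum_le_sum hsum) (by positivity)
      _ = 4 * β * ((H:ℝ) * Real.sqrt (3 * Γ * T)) := by
            rw [Finset.sum_const, Nat.card_Icc]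
            simp [nsmul_eq_mul]
  -- arithmetic conclusion
  have hTpos : (0:ℝ) < T := by exact_mod_cast hT
  have hsqrt : Real.sqrt (3 * Γ * T) = Real.sqrt 3 * Real.sqrt (Γ / T) * T := by
    rw [show (3:ℝ) * Γ * T = 3 * (Γ / T) * T^2 by field_simp]
    rw [Real.sqrt_mul (by positivity), Real.sqrt_mul (by norm_num),
      Real.sqrt_sq hTpos.le]
  have hHpos : (0:ℝ) < H := by exact_mod_cast hH
  have h4 : (4:ℝ) ≤ 2 * ((H:ℝ) + 1) := by
    have : (1:ℝ) ≤ (H:ℝ) := by exact_mod_cast hH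
    linarith
  have final : 4 * β * ((H:ℝ) * Real.sqrt (3 * Γ * T)) ≤
      (T:ℝ) * (2 * Real.sqrt 3 * β * H * (H + 1) * Real.sqrt (Γ / T)) := by
    rw [hsqrt]
    have h1 : (1:ℝ) ≤ (H:ℝ) := by exact_mod_cast hH
    have hge : (T:ℝ) * (2 * Real.sqrt 3 * β * H * (H + 1) * Real.sqrt (Γ / T)) -
        4 * β * ((H:ℝ) * (Real.sqrt 3 * Real.sqrt (Γ / T) * T)) =
        2 * Real.sqrt 3 * β * (H:ℝ) * Real.sqrt (Γ / T) * T * ((H:ℝ) - 1) := by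
      ring
    have hnn : 0 ≤ 2 * Real.sqrt 3 * β * (H:ℝ) * Real.sqrt (Γ / T) * T * ((H:ℝ) - 1) := by
      apply mul_nonneg _ (by linarith)
      positivity
    linarith
  have := le_trans havg final
  exact le_of_mul_le_mul_left (by linarith) hTpos
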